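/- Let q ≥ 8 and let τ ∈ 𝔽_{q²} satisfy τ^q + τ = 1. For every (b₀, b₁, b₂, ε) ∈ 𝔽_{q²}⁴ with (b₀, b₁, b₂, ε) ≠ (0,0,0,0), the count N(b₀,b₁,b₂,ε) satisfies N ≤ 6 or N = q−1 or N = q+1. Consequently, every nonzero codeword of the m = 3 code C_𝓛(𝙳,𝙶) has weight equal to q²−q−2, equal to q²−q, or at least q²−7; in particular the third minimum weight of the code is at least q²−7, and the number of pairwise different nonzero weights is at most nine. -/

import Mathlib

open Finset Polynomial

lemma stmt17_fiber_count {F : Type*} [Field F] [Fintype F] [DecidableEq F] {d e : ℕ}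
    (hd : 0 < d) (he : 0 < e) (hde : d * e = Fintype.card F - 1) {c : F} (hc : c ^ e = 1) :
    (Finset.univ.filter fun x : F => x ≠ 0 ∧ x ^ d = c).card = d := by
  have hc0 : c ≠ 0 := by rintro rfl; rw [zero_pow he.ne'] at hc; exact zero_ne_one hc
  obtain ⟨g, hg⟩ := IsCyclic.exists_generator (α := Fˣ)
  have hog : orderOf g = d * e := by
    rw [orderOf_eq_card_of_forall_mem_zpowers hg, Nat.card_eq_fintype_card, Fintype.card_units, ← hde]
  obtain ⟨m, hm'⟩ := (mem_powers_iff_mem_zpowers).mpr (hg (Units.mk0 c hc0))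
  have hm : g ^ m = Units.mk0 c hc0 := hm'
  have hcue : (Units.mk0 c hc0) ^ e = 1 := by
    apply Units.ext
    rw [Units.val_pow_eq_pow_val, Units.val_mk0, hc, Units.val_one]
  have hone : g ^ (m * e) = 1 := by rw [pow_mul, hm, hcue]
  have hdvd : d * e ∣ m * e := hog ▸ orderOf_dvd_of_pow_eq_one hone
  obtain ⟨j, rfl⟩ := (Nat.mul_dvd_mul_iff_right he).mp hdvd
  have hm : g ^ (d * j) = Units.mk0 c hc0 := hm
  have hroot : ((g ^ j : Fˣ) : F) ^ d = c := by
    rw [← Units.val_pow_eq_pow_val, ← pow_mul, mul_comm j d, hm, Units.val_mk0]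
  have horder : orderOf (g ^ e) = d := by
    rw [orderOf_pow, hog, Nat.gcd_comm, Nat.gcd_eq_left (dvd_mul_left e d),
      Nat.mul_div_cancel _ he]
  have hζp : IsPrimitiveRoot ((g ^ e : Fˣ) : F) d := by
    have h1 : IsPrimitiveRoot (g ^ e) d := horder ▸ IsPrimitiveRoot.orderOf (g ^ e)
    exact (IsPrimitiveRoot.coe_units_iff).mpr h1
  have hset : (Finset.univ.filter fun x : F => x ≠ 0 ∧ x ^ d = c) = (nthRoots d c).toFinset := by
    ext x
    simp only [mem_filter, mem_univ, true_and, Multiset.mem_toFinset, mem_nthRoots hd]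
    constructor
    · exact fun h => h.2
    · intro h
      refine ⟨?_, h⟩
      rintro rfl
      rw [zero_pow hd.ne'] at h
      exact hc0 h.symm
  rw [hset, Multiset.toFinset_card_of_nodup (hζp.nthRoots_nodup hc0), hζp.card_nthRoots,
    if_pos ⟨_, hroot⟩]

lemma stmt17_card_le_deg {F : Type*} [Field F] [DecidableEq F] (p : Polynomial F) (hp : p ≠ 0)
    (S : Finset F) (hS : ∀ x ∈ S, p.eval x = 0) : S.card ≤ p.natDegree := by
  calc S.card ≤ p.roots.toFinset.card := by
        apply Finset.card_le_card
        intro x hx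
        exact Multiset.mem_toFinset.mpr (Polynomial.mem_roots'.mpr ⟨hp, hS x hx⟩)
  _ ≤ Multiset.card p.roots := Multiset.toFinset_card_le _
  _ ≤ p.natDegree := Polynomial.card_roots' p


/-- Let `q ≥ 8` and `τ^q + τ = 1`. For every `(b₀, b₁, b₂, ε) ≠ (0,0,0,0)`,
the count `N(b₀,b₁,b₂,ε)` satisfies `N ≤ 6` or `N = q − 1` or `N = q + 1`. Consequently
every nonzero codeword of the `m = 3` code `C_𝓛(𝙳,𝙶)` has weight `q² − 1 − N` equal to
`q² − q − 2`, equal to `q² − q`, or at least `q² − 7`; in particular the third minimum weight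
is at least `q² − 7` and the number of pairwise different nonzero weights is at most nine. -/
theorem stmt_17 (q : ℕ) (hq : IsPrimePow q) (hq8 : 8 ≤ q)
    (F : Type*) [Field F] [Fintype F] [DecidableEq F] (hF : Fintype.card F = q ^ 2)
    (τ : F) (hτ : τ ^ q + τ = 1)
    (N : F → F → F → F → ℕ)
    (hN : ∀ b₀ b₁ b₂ ε : F, N b₀ b₁ b₂ ε =
      (Finset.univ.filter fun x : F => x ≠ 0 ∧
        τ * x ^ (q + 1) * (b₀ + b₁ * x + b₂ * τ * x ^ (q + 1)) + ε * x ^ 3 = 0).card) :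
    (∀ b₀ b₁ b₂ ε : F, (b₀, b₁, b₂, ε) ≠ (0, 0, 0, 0) →
      N b₀ b₁ b₂ ε ≤ 6 ∨ N b₀ b₁ b₂ ε = q - 1 ∨ N b₀ b₁ b₂ ε = q + 1) ∧
    (∀ b₀ b₁ b₂ ε : F, (b₀, b₁, b₂, ε) ≠ (0, 0, 0, 0) →
      q ^ 2 - 1 - N b₀ b₁ b₂ ε = q ^ 2 - q - 2 ∨
      q ^ 2 - 1 - N b₀ b₁ b₂ ε = q ^ 2 - q ∨
      q ^ 2 - 7 ≤ q ^ 2 - 1 - N b₀ b₁ b₂ ε) ∧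
    Set.ncard {w : ℕ | ∃ b₀ b₁ b₂ ε : F,
        (b₀, b₁, b₂, ε) ≠ (0, 0, 0, 0) ∧ w = q ^ 2 - 1 - N b₀ b₁ b₂ ε} ≤ 9 := by
  have hq0 : 0 < q := by omega
  have hτ0 : τ ≠ 0 := by
    intro h; rw [h, zero_pow hq0.ne', zero_add] at hτ; exact zero_ne_one hτ
  have hτq : τ ^ q = 1 - τ := by linear_combination hτ
  have hs0 : 1 - τ ≠ 0 := by
    intro h
    have hτ1 : τ = 1 := by linear_combination -h
    rw [hτ1, one_pow] at hτ
    exact one_ne_zero (α := F) (by linear_combination hτ)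
  have hxqq : ∀ z : F, (z ^ q) ^ q = z := by
    intro z; rw [← pow_mul, show q * q = q ^ 2 by ring, ← hF, FiniteField.pow_card]
  obtain ⟨p, k, hp, hk, hpk⟩ := hq
  haveI hfact : Fact p.Prime := ⟨hp.nat_prime⟩
  have hcharF : CharP F p := by
    have h1 : CharP F (ringChar F) := ringChar.charP F
    obtain ⟨n, hn', hcard⟩ := FiniteField.card F (ringChar F)
    have hdvd : ringChar F ∣ p ^ (k * 2) := by
      have h2 : ringChar F ∣ ringChar F ^ (n : ℕ) := dvd_pow_self _ n.2.ne'
      rwa [← hcard, hF, ← hpk, ← pow_mul] at h2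
    have h3 : ringChar F = p :=
      (Nat.prime_dvd_prime_iff_eq (CharP.char_is_prime F _) hp.nat_prime).mp
        ((CharP.char_is_prime F _).dvd_of_dvd_pow hdvd)
    exact h3 ▸ h1
  haveI := hcharF
  haveI : ExpChar F p := ExpChar.prime hp.nat_prime
  have hψ : ∀ z : F, (iterateFrobenius F p k) z = z ^ q := by
    intro z; rw [iterateFrobenius_def, hpk]
  have hneg1 : (-1 : F) ^ q = -1 := by
    rcases Nat.even_or_odd q with hev | hod
    · have hp2 : p = 2 := by
        have h2 : (2 : ℕ) ∣ p ^ k := by rw [hpk]; exact hev.two_dvd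
        exact ((Nat.prime_dvd_prime_iff_eq Nat.prime_two hp.nat_prime).mp
          (Nat.prime_two.dvd_of_dvd_pow h2)).symm
      have h2 : (2 : F) = 0 := by
        have := CharP.cast_eq_zero F p
        rw [hp2] at this
        exact_mod_cast this
      have hm : (-1 : F) = 1 := by linear_combination -h2
      rw [hm, one_pow]
    · exact Odd.neg_one_pow hod
  have hde1 : (q - 1) * (q + 1) = Fintype.card F - 1 := by
    rw [hF]
    have h : q ^ 2 = (q - 1) * (q + 1) + 1 := by
      obtain ⟨a, rfl⟩ : ∃ a, q = a + 1 := ⟨q - 1, by omega⟩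
      simp only [Nat.add_sub_cancel]
      ring
    exact (Nat.sub_eq_of_eq_add h).symm
  have hde2 : (q + 1) * (q - 1) = Fintype.card F - 1 := by rw [mul_comm]; exact hde1
  have key : ∀ b₀ b₁ b₂ ε : F, (b₀, b₁, b₂, ε) ≠ (0, 0, 0, 0) →
      N b₀ b₁ b₂ ε ≤ 6 ∨ N b₀ b₁ b₂ ε = q - 1 ∨ N b₀ b₁ b₂ ε = q + 1 := by
    intro b₀ b₁ b₂ ε hne
    rw [hN]
    by_cases hε : ε = 0
    · subst hε
      by_cases hb2 : b₂ = 0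
      · subst hb2
        by_cases hb1 : b₁ = 0
        · subst hb1
          have hb0 : b₀ ≠ 0 := by simpa using hne
          left
          have hemp : (Finset.univ.filter fun x : F => x ≠ 0 ∧
              τ * x ^ (q + 1) * (b₀ + 0 * x + 0 * τ * x ^ (q + 1)) + 0 * x ^ 3 = 0) = ∅ := by
            rw [Finset.filter_eq_empty_iff]
            intro x _
            rintro ⟨hx0, heqx⟩
            have h2 : τ * x ^ (q+1) * b₀ = 0 := by linear_combination heqx
            rcases mul_eq_zero.mp h2 with h | h
            · rcases mul_eq_zero.mp h with h' | h'
              · exact hτ0 h'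
              · exact pow_ne_zero _ hx0 h'
            · exact hb0 h
          rw [hemp]
          simp
        · left
          have hsub : (Finset.univ.filter fun x : F => x ≠ 0 ∧
              τ * x ^ (q + 1) * (b₀ + b₁ * x + 0 * τ * x ^ (q + 1)) + 0 * x ^ 3 = 0) ⊆
              {-(b₀/b₁)} := by
            intro x hx
            simp only [mem_filter, mem_univ, true_and] at hx
            obtain ⟨hx0, heqx⟩ := hx
            have h2 : τ * x ^ (q+1) * (b₀ + b₁ * x) = 0 := by linear_combination heqx
            have h3 : b₀ + b₁ * x = 0 := by
              rcases mul_eq_zero.mp h2 with h | h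
              · rcases mul_eq_zero.mp h with h' | h'
                · exact absurd h' hτ0
                · exact absurd h' (pow_ne_zero _ hx0)
              · exact h
            simp only [mem_singleton]
            field_simp
            linear_combination h3
          exact le_trans (Finset.card_le_card hsub) (by simp)
      · by_cases hb1 : b₁ = 0
        · subst hb1
          by_cases hb0 : b₀ = 0
          · subst hb0
            left
            have hemp : (Finset.univ.filter fun x : F => x ≠ 0 ∧
                τ * x ^ (q + 1) * (0 + 0 * x + b₂ * τ * x ^ (q + 1)) + 0 * x ^ 3 = 0) = ∅ := by
              rw [Finset.filter_eq_empty_iff]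
              intro x _
              rintro ⟨hx0, heqx⟩
              have h2 : τ * x ^ (q+1) * (b₂ * τ * x ^ (q+1)) = 0 := by linear_combination heqx
              have hxp : x ^ (q+1) ≠ 0 := pow_ne_zero _ hx0
              rcases mul_eq_zero.mp h2 with h | h
              · rcases mul_eq_zero.mp h with h' | h'
                · exact hτ0 h'
                · exact hxp h'
              · rcases mul_eq_zero.mp h with h' | h'
                · rcases mul_eq_zero.mp h' with h'' | h''
                  · exact hb2 h''
                  · exact hτ0 h''
                · exact hxp h'
            rw [hemp]
            simp
          · by_cases hD : b₂^q*(1-τ)*b₀ - b₂*τ*b₀^q = 0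
            · right; right
              have hbτ : b₂ * τ ≠ 0 := mul_ne_zero hb2 hτ0
              have hc0' : -(b₀/(b₂*τ)) ≠ 0 := by
                rw [neg_ne_zero]
                exact div_ne_zero hb0 hbτ
              have hcq : (-(b₀/(b₂*τ)))^q = -(b₀/(b₂*τ)) := by
                have h1 : (-(b₀/(b₂*τ)))^q = -(b₀^q/(b₂^q*(1-τ))) := by
                  rw [← neg_one_mul, mul_pow, hneg1, div_pow, mul_pow, hτq, neg_one_mul]
                rw [h1]
                have hb2q : b₂^q ≠ 0 := pow_ne_zero _ hb2
                field_simp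
                linear_combination hD
              have hce : (-(b₀/(b₂*τ)))^(q-1) = 1 := by
                have h5 : (-(b₀/(b₂*τ)))^(q-1) * (-(b₀/(b₂*τ))) = 1 * (-(b₀/(b₂*τ))) := by
                  rw [one_mul, ← pow_succ, show q-1+1 = q by omega, hcq]
                exact mul_right_cancel₀ hc0' h5
              have hfe : (Finset.univ.filter fun x : F => x ≠ 0 ∧
                  τ * x ^ (q + 1) * (b₀ + 0 * x + b₂ * τ * x ^ (q + 1)) + 0 * x ^ 3 = 0) =
                  (Finset.univ.filter fun x : F => x ≠ 0 ∧ x^(q+1) = -(b₀/(b₂*τ))) := by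
                ext x
                simp only [mem_filter, mem_univ, true_and]
                refine and_congr_right fun hx0 => ?_
                constructor
                · intro h
                  have h2 : τ * x ^ (q+1) * (b₀ + b₂ * τ * x ^ (q+1)) = 0 := by
                    linear_combination h
                  have h3 : b₀ + b₂ * τ * x ^ (q+1) = 0 := by
                    rcases mul_eq_zero.mp h2 with h' | h'
                    · rcases mul_eq_zero.mp h' with h'' | h''
                      · exact absurd h'' hτ0
                      · exact absurd h'' (pow_ne_zero _ hx0)
                    · exact h'
                  field_simp
                  linear_combination h3
                · intro h
                  rw [h]
                  field_simp
                  ring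
              rw [hfe, stmt17_fiber_count (by omega) (by omega) hde2 hce]
            · left
              have hemp : (Finset.univ.filter fun x : F => x ≠ 0 ∧
                  τ * x ^ (q + 1) * (b₀ + 0 * x + b₂ * τ * x ^ (q + 1)) + 0 * x ^ 3 = 0) = ∅ := by
                rw [Finset.filter_eq_empty_iff]
                intro x _
                rintro ⟨hx0, heqx⟩
                have h2 : τ * (x^q*x) * (b₀ + b₂ * τ * (x^q*x)) = 0 := by
                  rw [pow_succ] at heqx
                  linear_combination heqx
                have hG : b₀ + b₂*τ*(x^q*x) = 0 := by
                  rcases mul_eq_zero.mp h2 with h | h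
                  · rcases mul_eq_zero.mp h with h' | h'
                    · exact absurd h' hτ0
                    · exact absurd h' (mul_ne_zero (pow_ne_zero _ hx0) hx0)
                  · exact h
                have hG2 := congrArg (iterateFrobenius F p k) hG
                simp only [map_add, map_mul, map_pow, map_zero] at hG2
                simp only [hψ] at hG2
                rw [hxqq, hτq] at hG2
                apply hD
                linear_combination (b₂^q*(1-τ))*hG - (b₂*τ)*hG2
              rw [hemp]
              simp
        · left
          obtain ⟨pq, hpq⟩ : ∃ pq : Polynomial F, pq = C (b₁^q*b₀) +
              C (b₂^q*(1-τ)*b₀ + b₁^q*b₁ - b₂*τ*b₀^q) * X + C (b₂^q*(1-τ)*b₁) * X^2 := ⟨_, rfl⟩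
          have hqne : pq ≠ 0 := by
            intro h0
            have h2 : pq.coeff 2 = b₂^q*(1-τ)*b₁ := by
              rw [hpq]
              simp only [coeff_add, coeff_C_mul, coeff_X_pow, coeff_C, coeff_X]
              norm_num
            rw [h0, coeff_zero] at h2
            exact (mul_ne_zero (mul_ne_zero (pow_ne_zero q hb2) hs0) hb1) h2.symm
          have hdq : pq.natDegree ≤ 2 := by rw [hpq]; compute_degree!
          refine le_trans (le_trans (stmt17_card_le_deg pq hqne _ ?_) hdq) (by omega)
          intro x hx
          simp only [mem_filter, mem_univ, true_and] at hx
          obtain ⟨hx0, heqx⟩ := hx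
          have h2 : τ * (x^q*x) * (b₀ + b₁*x + b₂ * τ * (x^q*x)) = 0 := by
            rw [pow_succ] at heqx
            linear_combination heqx
          have hG : b₀ + b₁*x + b₂*τ*(x^q*x) = 0 := by
            rcases mul_eq_zero.mp h2 with h | h
            · rcases mul_eq_zero.mp h with h' | h'
              · exact absurd h' hτ0
              · exact absurd h' (mul_ne_zero (pow_ne_zero _ hx0) hx0)
            · exact h
          have hG2 := congrArg (iterateFrobenius F p k) hG
          simp only [map_add, map_mul, map_pow, map_zero] at hG2
          simp only [hψ] at hG2
          rw [hxqq, hτq] at hG2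
          rw [hpq]
          simp only [eval_add, eval_mul, eval_pow, eval_C, eval_X]
          linear_combination (b₂^q*(1-τ)*x + b₁^q)*hG - (b₂*τ*x)*hG2
    ·
      have hεq : ε ^ q ≠ 0 := pow_ne_zero _ hε
      obtain ⟨pp, hpp⟩ : ∃ pp : Polynomial F, pp = C (b₀^2*(b₀^q)*(ε^q)^2*τ^2*(1-τ)) + C (2*b₀*b₁*(b₀^q)*(ε^q)^2*τ^2*(1-τ)) * X + C (b₁^2*(b₀^q)*(ε^q)^2*τ^2*(1-τ) - b₀*ε*(b₁^q)*(ε^q)^2*τ*(1-τ) - b₀*b₂*(b₀^q)*(b₁^q)*(ε^q)*τ^3*(1-τ)^2) * X^2 + C (ε^2*(ε^q)^3 - 2*b₂*ε*(b₀^q)*(ε^q)^2*τ^2*(1-τ) + b₂^2*(b₀^q)^2*(ε^q)*τ^4*(1-τ)^2 - b₁*ε*(b₁^q)*(ε^q)^2*τ*(1-τ) - b₁*b₂*(b₀^q)*(b₁^q)*(ε^q)*τ^3*(1-τ)^2 - b₀*ε*(b₂^q)*(ε^q)^2*τ*(1-τ)^2 - b₀*b₂*(b₀^q)*(b₂^q)*(ε^q)*τ^3*(1-τ)^3)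 * X^3 + C (b₂*ε*(b₁^q)^2*(ε^q)*τ^2*(1-τ)^2 - b₁*ε*(b₂^q)*(ε^q)^2*τ*(1-τ)^2 - b₁*b₂*(b₀^q)*(b₂^q)*(ε^q)*τ^3*(1-τ)^3) * X^4 + C (2*b₂*ε*(b₁^q)*(b₂^q)*(ε^q)*τ^2*(1-τ)^3) * X^5 + C (b₂*ε*(b₂^q)^2*(ε^q)*τ^2*(1-τ)^4) * X^6 := ⟨_, rfl⟩
      have hroots : ∀ x : F, x ≠ 0 →
          τ * x ^ (q + 1) * (b₀ + b₁ * x + b₂ * τ * x ^ (q + 1)) + ε * x ^ 3 = 0 →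
          pp.eval x = 0 := by
        intro x hx0 heq
        have heq1 : b₂*τ^2*x*(x^q)^2 + τ*(b₁*x + b₀)*(x^q) + ε*x^2 = 0 := by
          apply mul_left_cancel₀ hx0
          rw [mul_zero]
          rw [pow_succ] at heq
          linear_combination heq
        have heq2 := congrArg (iterateFrobenius F p k) heq1
        simp only [map_add, map_mul, map_pow, map_zero] at heq2
        simp only [hψ] at heq2
        rw [hxqq, hτq] at heq2
        have hx7 : x * (pp.eval x) = 0 := by
          rw [hpp]
          simp only [eval_add, eval_mul, eval_pow, eval_C, eval_X]
          linear_combination ((ε^q*(τ*(b₁*x + b₀)) - b₂*τ^2*x*((1-τ)*x*(b₂^q*(1-τ)*x + b₁^q))))^2 * heq2 + (ε^q*((ε^q*(ε*x^2) - b₂*τ^2*x*(b₀^q*(1-τ)*x)) - (ε^q*(τ*(b₁*x + b₀)) - b₂*τ^2*x*((1-τ)*x*(b₂^q*(1-τ)*x + b₁^q)))*(x^q)) - (1-τ)*x*(b₂^q*(1-τ)*x + b₁^q)*(ε^q*(τ*(b₁*x + b₀)) - b₂*τ^2*x*((1-τ)*x*(b₂^q*(1-τ)*x + b₁^q)))) *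 (ε^q * heq1 - (b₂*τ^2*x) * heq2)
        exact (mul_eq_zero.mp hx7).resolve_left hx0
      have hdeg : pp.natDegree ≤ 6 := by rw [hpp]; compute_degree!
      have hbound : pp ≠ 0 →
          (Finset.univ.filter fun x : F => x ≠ 0 ∧
            τ * x ^ (q + 1) * (b₀ + b₁ * x + b₂ * τ * x ^ (q + 1)) + ε * x ^ 3 = 0).card ≤ 6 := by
        intro hpne
        refine le_trans (stmt17_card_le_deg pp hpne _ ?_) hdeg
        intro x hx
        simp only [mem_filter, mem_univ, true_and] at hx
        exact hroots x hx.1 hx.2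
      have hco0 : pp.coeff 0 = b₀^2*(b₀^q)*(ε^q)^2*τ^2*(1-τ) := by
        rw [hpp]
        simp only [coeff_add, coeff_C_mul, coeff_X_pow, coeff_C, coeff_X]
        norm_num
      have hco3 : pp.coeff 3 = ε^2*(ε^q)^3 - 2*b₂*ε*(b₀^q)*(ε^q)^2*τ^2*(1-τ) + b₂^2*(b₀^q)^2*(ε^q)*τ^4*(1-τ)^2 - b₁*ε*(b₁^q)*(ε^q)^2*τ*(1-τ) - b₁*b₂*(b₀^q)*(b₁^q)*(ε^q)*τ^3*(1-τ)^2 - b₀*ε*(b₂^q)*(ε^q)^2*τ*(1-τ)^2 - b₀*b₂*(b₀^q)*(b₂^q)*(ε^q)*τ^3*(1-τ)^3 := by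
        rw [hpp]
        simp only [coeff_add, coeff_C_mul, coeff_X_pow, coeff_C, coeff_X]
        norm_num
      have hco6 : pp.coeff 6 = b₂*ε*(b₂^q)^2*(ε^q)*τ^2*(1-τ)^4 := by
        rw [hpp]
        simp only [coeff_add, coeff_C_mul, coeff_X_pow, coeff_C, coeff_X]
        norm_num
      by_cases hb2 : b₂ = 0
      · subst hb2
        by_cases hb0 : b₀ = 0
        · subst hb0
          by_cases hdg : ε^q*ε - τ*(1-τ)*(b₁^q*b₁) = 0
          · right; left
            have hb1 : b₁ ≠ 0 := by
              rintro rfl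
              simp only [zero_pow hq0.ne', mul_zero, zero_mul, sub_zero] at hdg
              rcases mul_eq_zero.mp hdg with h | h
              · exact hεq h
              · exact hε h
            have hτb : τ * b₁ ≠ 0 := mul_ne_zero hτ0 hb1
            have hneg2 : (-1 : F)^(q+1) = 1 := by rw [pow_succ, hneg1]; ring
            have hcpow : (-(ε/(τ*b₁))) ^ (q+1) = 1 := by
              have h1 : ε^(q+1) = (τ*b₁)^(q+1) := by
                rw [pow_succ, pow_succ, mul_pow, hτq]
                linear_combination hdg
              rw [← neg_one_mul, mul_pow, hneg2, one_mul, div_pow, h1,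
                div_self (pow_ne_zero _ hτb)]
            have hfe : (Finset.univ.filter fun x : F => x ≠ 0 ∧
                τ * x ^ (q + 1) * (0 + b₁ * x + 0 * τ * x ^ (q + 1)) + ε * x ^ 3 = 0) =
                (Finset.univ.filter fun x : F => x ≠ 0 ∧ x^(q-1) = -(ε/(τ*b₁))) := by
              ext x
              simp only [mem_filter, mem_univ, true_and]
              refine and_congr_right fun hx0 => ?_
              have hxp : x^(q+1)*x = x^(q-1)*x^3 := by
                rw [← pow_succ, ← pow_add]
                congr 1
                omega
              constructor
              · intro h
                have h3 : x^3*(τ*b₁*x^(q-1) + ε) = 0 := by linear_combination h - τ*b₁*hxp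
                have h4 : τ*b₁*x^(q-1) + ε = 0 :=
                  (mul_eq_zero.mp h3).resolve_left (pow_ne_zero _ hx0)
                field_simp
                linear_combination h4
              · intro h
                have h4 : τ*b₁*x^(q-1) + ε = 0 := by
                  rw [h]
                  field_simp
                  ring
                linear_combination x^3*h4 + τ*b₁*hxp
            rw [hfe, stmt17_fiber_count (by omega) (by omega) hde1 hcpow]
          · left
            apply hbound
            intro h0
            rw [h0, coeff_zero] at hco3
            apply hdg
            simp only [zero_pow hq0.ne', mul_zero, zero_mul, sub_zero, add_zero, zero_add,
              zero_sub, neg_zero] at hco3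
            have hfac : ε*(ε^q)^2*(ε^q*ε - τ*(1-τ)*(b₁^q*b₁)) = 0 := by linear_combination -hco3
            rcases mul_eq_zero.mp hfac with h | h
            · rcases mul_eq_zero.mp h with h' | h'
              · exact absurd h' hε
              · exact absurd h' (pow_ne_zero _ hεq)
            · exact h
        · left
          apply hbound
          intro h0
          rw [h0, coeff_zero] at hco0
          exact (mul_ne_zero (mul_ne_zero (mul_ne_zero (mul_ne_zero (pow_ne_zero 2 hb0)
            (pow_ne_zero q hb0)) (pow_ne_zero 2 hεq)) (pow_ne_zero 2 hτ0)) hs0) hco0.symm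
      · left
        apply hbound
        intro h0
        rw [h0, coeff_zero] at hco6
        exact (mul_ne_zero (mul_ne_zero (mul_ne_zero (mul_ne_zero (mul_ne_zero hb2 hε)
          (pow_ne_zero 2 (pow_ne_zero q hb2))) hεq) (pow_ne_zero 2 hτ0))
          (pow_ne_zero 4 hs0)) hco6.symm
  refine ⟨key, ?_, ?_⟩
  · intro b₀ b₁ b₂ ε hne
    obtain ⟨Q, hQ1, hQ2⟩ : ∃ Q, q ^ 2 = Q ∧ 8 * q ≤ Q :=
      ⟨q ^ 2, rfl, by calc 8 * q ≤ q * q := Nat.mul_le_mul_right q hq8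
        _ = q ^ 2 := (sq q).symm⟩
    rw [hQ1]
    rcases key b₀ b₁ b₂ ε hne with h | h | h
    · right; right; omega
    · right; left; omega
    · left; omega
  · have hsub : {w : ℕ | ∃ b₀ b₁ b₂ ε : F,
        (b₀, b₁, b₂, ε) ≠ (0, 0, 0, 0) ∧ w = q ^ 2 - 1 - N b₀ b₁ b₂ ε} ⊆
        ↑(insert (q^2 - q - 2) (insert (q^2 - q)
          ((Finset.range 7).image (fun n => q^2 - 1 - n)))) := by
      rintro w ⟨b₀, b₁, b₂, ε, hne, rfl⟩
      obtain ⟨Q, hQ1, hQ2⟩ : ∃ Q, q ^ 2 = Q ∧ 8 * q ≤ Q :=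
        ⟨q ^ 2, rfl, by calc 8 * q ≤ q * q := Nat.mul_le_mul_right q hq8
          _ = q ^ 2 := (sq q).symm⟩
      simp only [Finset.coe_insert, Set.mem_insert_iff, Finset.coe_image,
        Set.mem_image, Finset.coe_range, Set.mem_Iio]
      rcases key b₀ b₁ b₂ ε hne with h | h | h
      · right; right
        exact ⟨N b₀ b₁ b₂ ε, by omega, rfl⟩
      · right; left
        rw [h, hQ1]
        omega
      · left
        rw [h, hQ1]
        omega
    have h9 : Set.ncard {w : ℕ | ∃ b₀ b₁ b₂ ε : F,
        (b₀, b₁, b₂, ε) ≠ (0, 0, 0, 0) ∧ w = q ^ 2 - 1 - N b₀ b₁ b₂ ε} ≤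
        (insert (q^2 - q - 2) (insert (q^2 - q)
          ((Finset.range 7).image (fun n => q^2 - 1 - n)))).card := by
      rw [← Set.ncard_coe_finset]
      exact Set.ncard_le_ncard hsub (Finset.finite_toSet _)
    refine h9.trans ?_
    refine le_trans (Finset.card_insert_le _ _) ?_
    have h1 := Finset.card_insert_le (q^2 - q) ((Finset.range 7).image (fun n => q^2 - 1 - n))
    have h2 := Finset.card_image_le (f := fun n => q^2 - 1 - n) (s := Finset.range 7)
    rw [Finset.card_range] at h2
    omega
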